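/- For every integer d ≥ 2, the polynomial R(v) = d²v⁴ - d(d+1)v³ + 2dv - 1 has exactly one root in the interval [0, 1/d]. -/

import Mathlib

theorem stmt1 (d : ℕ) (hd : 2 ≤ d) :
    ∃! v : ℝ, v ∈ Set.Icc 0 (1 / (d : ℝ)) ∧
      (d : ℝ) ^ 2 * v ^ 4 - d * (d + 1) * v ^ 3 + 2 * d * v - 1 = 0 := by
  have hd2 : (2:ℝ) ≤ (d:ℝ) := by exact_mod_cast hd
  have hd0 : (0:ℝ) < (d:ℝ) := by linarith
  set f : ℝ → ℝ := fun v => (d : ℝ) ^ 2 * v ^ 4 - d * (d + 1) * v ^ 3 + 2 * d * v - 1 with hf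
  have hcont : Continuous f := by fun_prop
  have hmono : StrictMonoOn f (Set.Icc 0 (1 / (d:ℝ))) := by
    apply strictMonoOn_of_deriv_pos (convex_Icc _ _) hcont.continuousOn
    intro v hv
    rw [interior_Icc, Set.mem_Ioo] at hv
    obtain ⟨h1, h2⟩ := hv
    have h2' : v * d < 1 := (lt_div_iff₀ hd0).mp h2
    have h4 : HasDerivAt (fun v : ℝ => v ^ 4) (4 * v ^ 3) v := by
      simpa using hasDerivAt_pow 4 v
    have h3 : HasDerivAt (fun v : ℝ => v ^ 3) (3 * v ^ 2) v := by
      simpa using hasDerivAt_pow 3 v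
    have hD : HasDerivAt f
        ((d:ℝ)^2 * (4 * v ^ 3) - (d:ℝ) * (d + 1) * (3 * v ^ 2) + 2 * d) v := by
      have := (((h4.const_mul ((d:ℝ)^2)).sub (h3.const_mul ((d:ℝ) * (d+1)))).add
        ((hasDerivAt_id v).const_mul (2 * (d:ℝ)))).sub_const 1
      exact this.congr_deriv (by ring)
    rw [hD.deriv]
    have hinner : 0 ≤ 3 * (d:ℝ) - 1 + (3 * d ^ 2 - d) * v - 4 * d ^ 2 * v ^ 2 := by
      nlinarith [sq_nonneg (v * d), mul_pos h1 hd0, mul_pos (mul_pos h1 hd0) (mul_pos h1 hd0)]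
    nlinarith [mul_nonneg (by linarith : (0:ℝ) ≤ 1 - v * d) hinner, sq_nonneg v]
  have hf0 : f 0 = -1 := by simp [hf]
  have hf1 : 0 ≤ f (1 / (d:ℝ)) := by
    have : f (1 / (d:ℝ)) = 1 - 1 / d := by
      simp only [hf]
      field_simp
      ring
    rw [this]
    have : 1 / (d:ℝ) ≤ 1 / 2 := by
      apply one_div_le_one_div_of_le <;> linarith
    linarith
  have hmem : (0:ℝ) ∈ Set.Icc (f 0) (f (1 / (d:ℝ))) := by
    rw [hf0]; exact ⟨by norm_num, hf1⟩
  obtain ⟨c, hc, hfc⟩ := intermediate_value_Icc (by positivity) hcont.continuousOn hmem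
  exact ⟨c, ⟨hc, hfc⟩, fun y hy => hmono.injOn hy.1 hc (by show f y = f c; rw [hf]; simp only []; rw [hy.2]; exact hfc.symm)⟩
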